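/- (Lemma 3) Fix real numbers r, η, r_i with 0 < η ≤ 1 and 0 < r_i < r ≤ 1. For each positive integer N, set n_N = ⌊N·η⌋, R_N = ⌊N·r⌋, k_N = ⌈N·η·r_i⌉, and define the hypergeometric tail probability Pr'_N = Σ_{x=k_N}^{min(R_N, n_N)} C(R_N, x)·C(N − R_N, n_N − x) / C(N, n_N) (a rational number, viewed as a real). Then Pr'_N tends to 1 as N → ∞. -/

import Mathlib

open Filter Finset

private lemma vdm_sum (N n R : ℕ) (hRN : R ≤ N) :
    ∑ x ∈ range (n+1), R.choose x * (N - R).choose (n - x) = N.choose n := by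
  have h := Nat.add_choose_eq R (N - R) n
  rw [Nat.add_sub_cancel' hRN] at h
  rw [h, Finset.Nat.sum_antidiagonal_eq_sum_range_succ (fun a b => R.choose a * (N-R).choose b)]

private lemma aux_bound (N R n k t : ℕ) (c : ℝ) (hc : 1 < c)
    (hRN : R ≤ N) (hnN : n ≤ N) (hkt : k ≤ t) (htn : t ≤ n)
    (hstep : ∀ x, x < t →
      c * ((R.choose x : ℝ) * ((N - R).choose (n - x) : ℝ))
        ≤ (R.choose (x+1) : ℝ) * ((N - R).choose (n - (x+1)) : ℝ)) :
    1 - (k : ℝ) * (1/c) ^ (t + 1 - k)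
      ≤ (∑ x ∈ Finset.Icc k (min R n),
          (R.choose x : ℝ) * ((N - R).choose (n - x) : ℝ) / (N.choose n : ℝ))
    ∧ (∑ x ∈ Finset.Icc k (min R n),
          (R.choose x : ℝ) * ((N - R).choose (n - x) : ℝ) / (N.choose n : ℝ)) ≤ 1 := by
  have hc0 : (0:ℝ) < c := lt_trans one_pos hc
  set a : ℕ → ℝ := fun x => (R.choose x : ℝ) * ((N - R).choose (n - x) : ℝ) with ha_def
  have ha0 : ∀ x, 0 ≤ a x := fun x => by positivity
  have hC : (0:ℝ) < (N.choose n : ℝ) := by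
    exact_mod_cast Nat.choose_pos hnN
  have hsum_all : ∑ x ∈ range (n+1), a x = (N.choose n : ℝ) := by
    rw [← vdm_sum N n R hRN]
    push_cast
    rfl
  have hgeom : ∀ j x, x + j ≤ t → c ^ j * a x ≤ a (x + j) := by
    intro j
    induction j with
    | zero => intro x _; simp
    | succ j ih =>
      intro x hxj
      have h1 : x + j ≤ t := by omega
      have h2 : x + j < t := by omega
      calc c ^ (j+1) * a x = c * (c ^ j * a x) := by ring
        _ ≤ c * a (x + j) := mul_le_mul_of_nonneg_left (ih x h1) hc0.le
        _ ≤ a (x + j + 1) := hstep (x+j) h2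
  have hat : a t ≤ (N.choose n : ℝ) := by
    rw [← hsum_all]
    exact Finset.single_le_sum (fun i _ => ha0 i) (by simp; omega)
  have hsmall : ∀ x, x < k → a x ≤ (N.choose n : ℝ) * (1/c) ^ (t + 1 - k) := by
    intro x hxk
    have hxt : x ≤ t := le_trans (le_of_lt (lt_of_lt_of_le hxk hkt)) le_rfl
    have h1 : c ^ (t - x) * a x ≤ a t := by
      have := hgeom (t - x) x (by omega)
      rwa [Nat.add_sub_cancel' hxt] at this
    have hcp : (0:ℝ) < c ^ (t - x) := by positivity
    have h2 : a x ≤ (N.choose n : ℝ) * (1/c) ^ (t - x) := by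
      rw [one_div, inv_pow, mul_comm, ← div_eq_inv_mul, le_div_iff₀ hcp]
      calc a x * c ^ (t-x) = c ^ (t-x) * a x := by ring
        _ ≤ a t := h1
        _ ≤ _ := hat
    refine le_trans h2 ?_
    apply mul_le_mul_of_nonneg_left _ hC.le
    apply pow_le_pow_of_le_one (by positivity) (by
      rw [div_le_one hc0]; exact hc.le) (by omega)
  have htail : ∑ x ∈ range k, a x ≤ (k:ℝ) * ((N.choose n : ℝ) * (1/c) ^ (t + 1 - k)) := by
    calc ∑ x ∈ range k, a x ≤ ∑ _x ∈ range k, (N.choose n : ℝ) * (1/c) ^ (t + 1 - k) :=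
        Finset.sum_le_sum (fun i hi => hsmall i (Finset.mem_range.mp hi))
      _ = (k:ℝ) * ((N.choose n : ℝ) * (1/c) ^ (t + 1 - k)) := by
        rw [Finset.sum_const, Finset.card_range]; ring
  have htail0 : 0 ≤ ∑ x ∈ range k, a x := Finset.sum_nonneg (fun i _ => ha0 i)
  have hsplit : ∑ x ∈ range k, a x + ∑ x ∈ Ico k (n+1), a x = (N.choose n : ℝ) := by
    rw [← hsum_all, Finset.range_eq_Ico, Finset.range_eq_Ico]
    exact Finset.sum_Ico_consecutive a (Nat.zero_le k) (by omega)
  have hIcc : ∑ x ∈ Finset.Icc k (min R n), a x = ∑ x ∈ Ico k (n+1), a x := by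
    apply Finset.sum_subset
    · intro x hx
      simp only [Finset.mem_Icc, Finset.mem_Ico] at *
      omega
    · intro x hx hnx
      simp only [Finset.mem_Icc, Finset.mem_Ico] at hx hnx
      have hxR : R < x := by omega
      have : R.choose x = 0 := Nat.choose_eq_zero_of_lt hxR
      simp [ha_def, this]
  have hgoal : (∑ x ∈ Finset.Icc k (min R n), a x / (N.choose n : ℝ))
      = 1 - (∑ x ∈ range k, a x) / (N.choose n : ℝ) := by
    rw [← Finset.sum_div, hIcc, eq_sub_iff_add_eq, ← add_div, add_comm,
      hsplit, div_self hC.ne']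
  constructor
  · rw [hgoal]
    have : (∑ x ∈ range k, a x) / (N.choose n : ℝ) ≤ (k:ℝ) * (1/c) ^ (t+1-k) := by
      rw [div_le_iff₀ hC]
      calc ∑ x ∈ range k, a x ≤ (k:ℝ) * ((N.choose n : ℝ) * (1/c) ^ (t + 1 - k)) := htail
        _ = (k:ℝ) * (1/c) ^ (t+1-k) * (N.choose n : ℝ) := by ring
    linarith
  · rw [hgoal]
    have : 0 ≤ (∑ x ∈ range k, a x) / (N.choose n : ℝ) := by positivity
    linarith

set_option maxHeartbeats 1000000 in
theorem sp_fec_recovery_tendsto_one (r η ri : ℝ)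
    (hη0 : 0 < η) (hη1 : η ≤ 1) (hri0 : 0 < ri) (hrir : ri < r) (hr1 : r ≤ 1) :
    Tendsto (fun N : ℕ =>
        ∑ x ∈ Finset.Icc (⌈(N : ℝ) * η * ri⌉₊) (min (⌊(N : ℝ) * r⌋₊) (⌊(N : ℝ) * η⌋₊)),
          ((⌊(N : ℝ) * r⌋₊).choose x * (N - ⌊(N : ℝ) * r⌋₊).choose (⌊(N : ℝ) * η⌋₊ - x) : ℝ)
            / N.choose ⌊(N : ℝ) * η⌋₊)
      atTop (nhds 1) := by
  have hr0 : 0 < r := lt_trans hri0 hrir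
  obtain ⟨β, hβ_def⟩ : ∃ b : ℝ, b = η * ((ri + r)/2) := ⟨_, rfl⟩
  have hβ0 : 0 < β := by rw [hβ_def]; positivity
  have hβη : β < η := by
    have h := mul_lt_mul_of_pos_left (show ri + r < 2 by linarith) hη0
    rw [hβ_def]; linarith
  have hβr : β < r := by
    have h1 : η * ((ri + r)/2) ≤ 1 * ((ri + r)/2) :=
      mul_le_mul_of_nonneg_right hη1 (by linarith)
    rw [hβ_def]; linarith
  have hδ0 : 0 < β - η * ri := by
    have h : 0 < η * ((r - ri)/2) := mul_pos hη0 (by linarith)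
    rw [hβ_def]; linarith only [h]
  obtain ⟨δ, hδ_def⟩ : ∃ b : ℝ, b = β - η * ri := ⟨_, rfl⟩
  have hδ0' : 0 < δ := by rw [hδ_def]; exact hδ0
  obtain ⟨A, hA_def⟩ : ∃ b : ℝ, b = (r - β) * (η - β) := ⟨_, rfl⟩
  have hA0 : 0 < A := by rw [hA_def]; exact mul_pos (by linarith) (by linarith)
  obtain ⟨B, hB_def⟩ : ∃ b : ℝ, b = β * (1 - r - η + β) := ⟨_, rfl⟩
  have hBA : B < A := by
    have h : A - B = η * r - β := by rw [hA_def, hB_def, hβ_def]; ring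
    have h2 := mul_lt_mul_of_pos_left hrir hη0
    have h3 : β = η * ((ri + r)/2) := hβ_def
    linarith
  obtain ⟨d, hd_def⟩ : ∃ b : ℝ, b = max B (A/2) := ⟨_, rfl⟩
  have hd0 : 0 < d := by rw [hd_def]; exact lt_max_of_lt_right (by linarith)
  have hdA : d < A := by rw [hd_def]; exact max_lt hBA (by linarith)
  obtain ⟨c, hc_def⟩ : ∃ b : ℝ, b = A / d := ⟨_, rfl⟩
  have hc1 : 1 < c := by rw [hc_def]; exact (one_lt_div hd0).mpr hdA
  have hc2 : c ≤ 2 := by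
    rw [hc_def, div_le_iff₀ hd0]
    have := le_max_right B (A/2)
    rw [hd_def]; linarith
  obtain ⟨c₁, hc₁_def⟩ : ∃ b : ℝ, b = (1 + c)/2 := ⟨_, rfl⟩
  have hc₁1 : 1 < c₁ := by rw [hc₁_def]; linarith
  have hc₁c : c₁ < c := by rw [hc₁_def]; linarith
  have hc₁32 : c₁ ≤ 3/2 := by rw [hc₁_def]; linarith
  have hc₁0 : 0 < c₁ := by linarith
  obtain ⟨Bm, hBm_def⟩ : ∃ b : ℝ, b = max B 0 := ⟨_, rfl⟩
  have hBmd : Bm ≤ d := by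
    rw [hBm_def, hd_def]
    exact max_le (le_max_left _ _) (le_trans (by linarith) (le_max_right B (A/2)))
  obtain ⟨ε0, hε0_def⟩ : ∃ b : ℝ, b = A - c₁ * Bm := ⟨_, rfl⟩
  have hε00 : 0 < ε0 := by
    have h1 : c₁ * Bm ≤ c₁ * d := mul_le_mul_of_nonneg_left hBmd hc₁0.le
    have h2 : c₁ * d < c * d := mul_lt_mul_of_pos_right hc₁c hd0
    have h3 : c * d = A := by rw [hc_def]; field_simp
    rw [hε0_def]; linarith
  obtain ⟨mx, hmx_def⟩ : ∃ b : ℝ, b = max (1 - r - η + β) 0 := ⟨_, rfl⟩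
  have hβmx : β * mx = Bm := by
    rw [hmx_def, mul_max_of_nonneg _ _ hβ0.le, mul_zero, hBm_def, hB_def]
  obtain ⟨q, hq_def⟩ : ∃ b : ℝ, b = 1/c₁ := ⟨_, rfl⟩
  have hq0 : 0 < q := by rw [hq_def]; positivity
  have hq1 : q < 1 := by rw [hq_def, div_lt_one hc₁0]; exact hc₁1
  -- core eventual numeric bounds
  obtain ⟨N₀, hN₀⟩ := exists_nat_ge (max (max (2/δ) (1/(η-β))) (max (1/(r-β)) (4*β/ε0)))
  have hcore : ∀ᶠ N : ℕ in atTop,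
      2 ≤ δ * N ∧ 1 ≤ (η - β) * N ∧ 1 ≤ (r - β) * N ∧ 4*β ≤ ε0 * N ∧ 1 ≤ N := by
    filter_upwards [eventually_ge_atTop (N₀ + 1)] with N hN
    have hNN : (N₀:ℝ) ≤ (N:ℝ) := by exact_mod_cast le_trans (Nat.le_succ N₀) hN
    have h1 : 2/δ ≤ (N:ℝ) :=
      le_trans (le_trans (le_max_left _ _) (le_max_left _ _)) (le_trans hN₀ hNN)
    have h2 : 1/(η-β) ≤ (N:ℝ) :=
      le_trans (le_trans (le_max_right _ _) (le_max_left _ _)) (le_trans hN₀ hNN)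
    have h3 : 1/(r-β) ≤ (N:ℝ) :=
      le_trans (le_trans (le_max_left _ _) (le_max_right _ _)) (le_trans hN₀ hNN)
    have h4 : 4*β/ε0 ≤ (N:ℝ) :=
      le_trans (le_trans (le_max_right _ _) (le_max_right _ _)) (le_trans hN₀ hNN)
    refine ⟨?_, ?_, ?_, ?_, by omega⟩
    · rw [div_le_iff₀ hδ0'] at h1; linarith only [h1]
    · rw [div_le_iff₀ (by linarith : (0:ℝ) < η - β)] at h2; linarith only [h2]
    · rw [div_le_iff₀ (by linarith : (0:ℝ) < r - β)] at h3; linarith only [h3]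
    · rw [div_le_iff₀ hε00] at h4; linarith only [h4]
  -- per-N derived facts
  have hfacts : ∀ᶠ N : ℕ in atTop,
      ((β - η*ri) * N - 1 ≤ ((⌊(N:ℝ)*β⌋₊ + 1 - ⌈(N:ℝ)*η*ri⌉₊ : ℕ) : ℝ)
        ∧ ⌈(N:ℝ)*η*ri⌉₊ ≤ N)
      ∧ (1 - (⌈(N:ℝ)*η*ri⌉₊ : ℝ) * q ^ (⌊(N:ℝ)*β⌋₊ + 1 - ⌈(N:ℝ)*η*ri⌉₊)
          ≤ (∑ x ∈ Finset.Icc (⌈(N : ℝ) * η * ri⌉₊) (min (⌊(N : ℝ) * r⌋₊) (⌊(N : ℝ) * η⌋₊)),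
              ((⌊(N : ℝ) * r⌋₊).choose x * (N - ⌊(N : ℝ) * r⌋₊).choose (⌊(N : ℝ) * η⌋₊ - x) : ℝ)
                / N.choose ⌊(N : ℝ) * η⌋₊)
        ∧ (∑ x ∈ Finset.Icc (⌈(N : ℝ) * η * ri⌉₊) (min (⌊(N : ℝ) * r⌋₊) (⌊(N : ℝ) * η⌋₊)),
              ((⌊(N : ℝ) * r⌋₊).choose x * (N - ⌊(N : ℝ) * r⌋₊).choose (⌊(N : ℝ) * η⌋₊ - x) : ℝ)
                / N.choose ⌊(N : ℝ) * η⌋₊) ≤ 1) := by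
    filter_upwards [hcore] with N hN
    obtain ⟨hc2N, hcηβ, hcrβ, hcε, hN1⟩ := hN
    rw [hδ_def] at hc2N
    have hN0 : (0:ℝ) ≤ N := Nat.cast_nonneg N
    set kN := ⌈(N:ℝ)*η*ri⌉₊ with hkN_def
    set tN := ⌊(N:ℝ)*β⌋₊ with htN_def
    set RN := ⌊(N:ℝ)*r⌋₊ with hRN_def
    set nN := ⌊(N:ℝ)*η⌋₊ with hnN_def
    have hk_ub : (kN:ℝ) < (N:ℝ)*η*ri + 1 := Nat.ceil_lt_add_one (by positivity)
    have ht_lb : (N:ℝ)*β - 1 < tN := by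
      have := Nat.lt_floor_add_one ((N:ℝ)*β); linarith
    have ht_ub : (tN:ℝ) ≤ (N:ℝ)*β := Nat.floor_le (by positivity)
    have hR_lb : (N:ℝ)*r - 1 < RN := by
      have := Nat.lt_floor_add_one ((N:ℝ)*r); linarith
    have hR_ub : (RN:ℝ) ≤ (N:ℝ)*r := Nat.floor_le (by positivity)
    have hn_lb : (N:ℝ)*η - 1 < nN := by
      have := Nat.lt_floor_add_one ((N:ℝ)*η); linarith
    have hn_ub : (nN:ℝ) ≤ (N:ℝ)*η := Nat.floor_le (by positivity)
    have hkleN : kN ≤ N := by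
      apply Nat.ceil_le.mpr
      have hr2 : η * ri ≤ 1 := by
        have := mul_le_mul hη1 (show ri ≤ 1 by linarith) hri0.le zero_le_one
        linarith only [this]
      have hh := mul_le_mul_of_nonneg_left hr2 hN0
      linarith only [hh]
    clear_value kN tN RN nN
    have hkt : kN ≤ tN := by
      have hx : (kN:ℝ) < (tN:ℝ) := by linarith only [hk_ub, ht_lb, hc2N]
      exact (Nat.cast_lt.mp hx).le
    have htn : tN ≤ nN := by
      have hx : (tN:ℝ) < (nN:ℝ) := by linarith only [ht_ub, hn_lb, hcηβ]
      exact (Nat.cast_lt.mp hx).le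
    have htR : tN ≤ RN := by
      have hx : (tN:ℝ) < (RN:ℝ) := by linarith only [ht_ub, hR_lb, hcrβ]
      exact (Nat.cast_lt.mp hx).le
    have hRleN : RN ≤ N := by
      have hNr : (N:ℝ)*r ≤ (N:ℝ)*1 := mul_le_mul_of_nonneg_left hr1 hN0
      have hx : (RN:ℝ) ≤ (N:ℝ) := by linarith only [hNr, hR_ub]
      exact_mod_cast hx
    have hnleN : nN ≤ N := by
      have hNη : (N:ℝ)*η ≤ (N:ℝ)*1 := mul_le_mul_of_nonneg_left hη1 hN0
      have hx : (nN:ℝ) ≤ (N:ℝ) := by linarith only [hNη, hn_ub]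
      exact_mod_cast hx
    constructor
    · constructor
      · have hle : kN ≤ tN + 1 := by omega
        have hcast : ((tN + 1 - kN : ℕ) : ℝ) = (tN:ℝ) + 1 - kN := by
          push_cast [Nat.cast_sub hle]
          ring
        rw [hcast]
        linarith only [ht_lb, hk_ub]
      · exact hkleN
    · -- establish hstep, then apply aux_bound
      have hstep : ∀ x, x < tN →
          c₁ * ((RN.choose x : ℝ) * ((N - RN).choose (nN - x) : ℝ))
            ≤ (RN.choose (x+1) : ℝ) * ((N - RN).choose (nN - (x+1)) : ℝ) := by
        intro x hx
        have hx1t : x + 1 ≤ tN := hx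
        have hxR : x < RN := lt_of_lt_of_le hx htR
        have hxn : x + 1 ≤ nN := le_trans hx1t htn
        have hx1β : (x:ℝ) + 1 ≤ (N:ℝ)*β := by
          have h' : ((x:ℝ) + 1) ≤ (tN:ℝ) := by exact_mod_cast hx1t
          linarith only [h', ht_ub]
        have hRx : (N:ℝ)*(r-β) ≤ (RN:ℝ) - x := by
          have h'' : (N:ℝ)*(r-β) = N*r - N*β := by ring
          linarith only [h'', hR_lb, hx1β]
        have hnx : (N:ℝ)*(η-β) ≤ (nN:ℝ) - x := by
          have h'' : (N:ℝ)*(η-β) = N*η - N*β := by ring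
          linarith only [h'', hn_lb, hx1β]
        have hRx0 : (0:ℝ) < (RN:ℝ) - x := by linarith only [hRx, hcrβ]
        have hnx0 : (0:ℝ) < (nN:ℝ) - x := by linarith only [hnx, hcηβ]
        set D := (N - RN) - (nN - x - 1) with hD_def
        have idc : (RN.choose x * (N-RN).choose (nN-x)) * ((RN-x) * (nN-x))
            = (RN.choose (x+1) * (N-RN).choose (nN-(x+1))) * ((x+1) * D) := by
          have e1 := Nat.choose_succ_right_eq RN x
          have e2 := Nat.choose_succ_right_eq (N-RN) (nN - x - 1)
          have h3 : nN - x - 1 + 1 = nN - x := by omega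
          have h4 : nN - (x+1) = nN - x - 1 := by omega
          rw [h3] at e2
          rw [h4]
          calc (RN.choose x * (N-RN).choose (nN-x)) * ((RN-x) * (nN-x))
              = (RN.choose x * (RN-x)) * ((N-RN).choose (nN-x) * (nN-x)) := by ring
            _ = (RN.choose (x+1) * (x+1)) * ((N-RN).choose (nN-x-1) * ((N-RN) - (nN-x-1))) := by
                rw [← e1, e2]
            _ = (RN.choose (x+1) * (N-RN).choose (nN-x-1)) * ((x+1) * D) := by
                rw [hD_def]; ring
        have hnum : c₁ * ((x:ℝ)+1) * (D:ℝ) ≤ ((RN:ℝ) - x) * ((nN:ℝ) - x) := by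
          rcases Nat.eq_zero_or_pos D with hD | hDpos
          · rw [hD]
            push_cast
            rw [mul_zero]
            exact mul_nonneg hRx0.le hnx0.le
          · have h5 : nN - (x+1) ≤ N - RN := by
              rw [hD_def] at hDpos; omega
            have h6 : D + RN + nN = N + x + 1 := by omega
            have h7 : (D:ℝ) + RN + nN = (N:ℝ) + x + 1 := by exact_mod_cast h6
            have hDcast : (D:ℝ) = ((N:ℝ) - RN) - ((nN:ℝ) - (x+1)) := by
              linarith only [h7]
            have hmx1 : 1-r-η+β ≤ mx := hmx_def ▸ le_max_left _ _
            have hmx0 : (0:ℝ) ≤ mx := hmx_def ▸ le_max_right _ _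
            have hmxN : (N:ℝ)*(1-r-η+β) ≤ (N:ℝ)*mx := mul_le_mul_of_nonneg_left hmx1 hN0
            have hD_ub : (D:ℝ) ≤ (N:ℝ)*mx + 2 := by
              rw [hDcast]
              have hex : (N:ℝ)*(1-r-η+β) = N - N*r - N*η + N*β := by ring
              linarith only [hex, hR_lb, hn_lb, hx1β, hmxN]
            have hD0 : (0:ℝ) ≤ (D:ℝ) := Nat.cast_nonneg D
            have hc₁Bm : c₁ * Bm = A - ε0 := by rw [hε0_def]; ring
            have hβN : (0:ℝ) ≤ β*(N:ℝ) := mul_nonneg hβ0.le hN0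
            calc c₁ * ((x:ℝ)+1) * (D:ℝ)
                ≤ c₁ * ((N:ℝ)*β) * ((N:ℝ)*mx + 2) := by
                  apply mul_le_mul _ hD_ub hD0 (by positivity)
                  exact mul_le_mul_of_nonneg_left hx1β hc₁0.le
              _ = c₁ * Bm * (N:ℝ)^2 + 2*c₁*β*(N:ℝ) := by rw [← hβmx]; ring
              _ ≤ (A - ε0)*(N:ℝ)^2 + 3*β*(N:ℝ) := by
                  rw [hc₁Bm]
                  have h2c : 2*c₁ ≤ 3 := by linarith only [hc₁32]
                  have hm := mul_le_mul_of_nonneg_right h2c hβN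
                  linarith only [hm]
              _ ≤ A*(N:ℝ)^2 - β*(N:ℝ) := by
                  have hm := mul_le_mul_of_nonneg_right hcε hN0
                  have hsq : ε0*(N:ℝ)*(N:ℝ) = ε0*(N:ℝ)^2 := by ring
                  linarith only [hm, hsq]
              _ ≤ A*(N:ℝ)^2 := by linarith only [hβN]
              _ = ((N:ℝ)*(r-β)) * ((N:ℝ)*(η-β)) := by rw [hA_def]; ring
              _ ≤ ((RN:ℝ) - x) * ((nN:ℝ) - x) := by
                  apply mul_le_mul hRx hnx (mul_nonneg hN0 (by linarith only [hβη])) hRx0.le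
        have c1cast : ((RN - x : ℕ) : ℝ) = (RN:ℝ) - x := Nat.cast_sub hxR.le
        have c2cast : ((nN - x : ℕ) : ℝ) = (nN:ℝ) - x := Nat.cast_sub (by omega)
        have key : ((RN.choose x : ℝ) * ((N-RN).choose (nN-x) : ℝ)) * (((RN:ℝ)-x) * ((nN:ℝ)-x))
            = ((RN.choose (x+1) : ℝ) * ((N-RN).choose (nN-(x+1)) : ℝ)) * (((x:ℝ)+1) * (D:ℝ)) := by
          rw [← c1cast, ← c2cast]
          exact_mod_cast congrArg (Nat.cast : ℕ → ℝ) idc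
        have hax : (0:ℝ) ≤ (RN.choose x : ℝ) * ((N-RN).choose (nN-x) : ℝ) := by positivity
        by_cases hz : (RN.choose x : ℝ) * ((N-RN).choose (nN-x) : ℝ) = 0
        · rw [hz, mul_zero]
          positivity
        · have haxpos : 0 < (RN.choose x : ℝ) * ((N-RN).choose (nN-x) : ℝ) :=
            lt_of_le_of_ne hax (Ne.symm hz)
          rcases Nat.eq_zero_or_pos D with hD | hDpos
          · exfalso
            rw [hD] at key
            push_cast at key
            simp only [mul_zero] at key
            have hpos := mul_pos haxpos (mul_pos hRx0 hnx0)
            linarith only [key, hpos]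
          · have hDr : (0:ℝ) < (D:ℝ) := by exact_mod_cast hDpos
            have hxD : (0:ℝ) < ((x:ℝ)+1) * (D:ℝ) := mul_pos (by positivity) hDr
            have h7 := mul_le_mul_of_nonneg_left hnum hax
            rw [show ((RN.choose x : ℝ) * ((N-RN).choose (nN-x) : ℝ))
                  * (((RN:ℝ) - x) * ((nN:ℝ) - x))
                = ((RN.choose (x+1) : ℝ) * ((N-RN).choose (nN-(x+1)) : ℝ))
                  * (((x:ℝ)+1) * (D:ℝ)) from key] at h7
            apply le_of_mul_le_mul_right _ hxD
            calc c₁ * ((RN.choose x : ℝ) * ((N-RN).choose (nN-x) : ℝ)) * (((x:ℝ)+1) * (D:ℝ))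
                = ((RN.choose x : ℝ) * ((N-RN).choose (nN-x) : ℝ))
                    * (c₁ * ((x:ℝ)+1) * (D:ℝ)) := by ring
              _ ≤ ((RN.choose (x+1) : ℝ) * ((N-RN).choose (nN-(x+1)) : ℝ))
                    * (((x:ℝ)+1) * (D:ℝ)) := h7
      have := aux_bound N RN nN kN tN c₁ hc₁1 hRleN hnleN hkt htn hstep
      rw [hq_def]
      exact this
    -- limit assembly
  have hb0 : Tendsto (fun N : ℕ =>
      (⌈(N:ℝ)*η*ri⌉₊ : ℝ) * q ^ (⌊(N:ℝ)*β⌋₊ + 1 - ⌈(N:ℝ)*η*ri⌉₊)) atTop (nhds 0) := by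
    have hreal : Tendsto (fun N : ℕ => (β - η*ri) * (N:ℝ) - 1) atTop atTop := by
      have h1 : Tendsto (fun N : ℕ => (β - η*ri) * (N:ℝ)) atTop atTop :=
        (tendsto_natCast_atTop_atTop).const_mul_atTop hδ0
      simpa [sub_eq_add_neg] using tendsto_atTop_add_const_right atTop (-1 : ℝ) h1
    have he_top : Tendsto (fun N : ℕ => ⌊(N:ℝ)*β⌋₊ + 1 - ⌈(N:ℝ)*η*ri⌉₊) atTop atTop := by
      rw [tendsto_atTop]
      intro b
      filter_upwards [hfacts, (tendsto_atTop.mp hreal) (b:ℝ)] with N hN hb'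
      have h1 := hN.1.1
      have h2 : (b:ℝ) ≤ ((⌊(N:ℝ)*β⌋₊ + 1 - ⌈(N:ℝ)*η*ri⌉₊ : ℕ):ℝ) := le_trans hb' h1
      exact_mod_cast h2
    have hmq : Tendsto (fun m : ℕ => (m:ℝ) * q^m) atTop (nhds 0) := by
      have h := (summable_pow_mul_geometric_of_norm_lt_one 1
        (show ‖q‖ < 1 by rw [Real.norm_eq_abs, abs_of_pos hq0]; exact hq1)).tendsto_atTop_zero
      simpa using h
    have hqm : Tendsto (fun m : ℕ => q^m) atTop (nhds 0) :=
      tendsto_pow_atTop_nhds_zero_of_lt_one hq0.le hq1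
    have hφ : Tendsto (fun m : ℕ => ((m:ℝ) + 1)/δ * q^m) atTop (nhds 0) := by
      have h := (hmq.add hqm).mul_const (1/δ)
      rw [add_zero, zero_mul] at h
      exact h.congr (fun m => by ring)
    apply tendsto_of_tendsto_of_tendsto_of_le_of_le' tendsto_const_nhds (hφ.comp he_top)
    · apply Filter.Eventually.of_forall
      intro N
      exact mul_nonneg (Nat.cast_nonneg _) (pow_nonneg hq0.le _)
    · filter_upwards [hfacts] with N hN
      obtain ⟨⟨he1, hkN⟩, -⟩ := hN
      show (⌈(N:ℝ)*η*ri⌉₊ : ℝ) * q ^ (⌊(N:ℝ)*β⌋₊ + 1 - ⌈(N:ℝ)*η*ri⌉₊)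
        ≤ (((⌊(N:ℝ)*β⌋₊ + 1 - ⌈(N:ℝ)*η*ri⌉₊ : ℕ):ℝ) + 1)/δ
            * q ^ (⌊(N:ℝ)*β⌋₊ + 1 - ⌈(N:ℝ)*η*ri⌉₊)
      have hkNr : (⌈(N:ℝ)*η*ri⌉₊ : ℝ)
          ≤ (((⌊(N:ℝ)*β⌋₊ + 1 - ⌈(N:ℝ)*η*ri⌉₊ : ℕ):ℝ) + 1)/δ := by
        rw [le_div_iff₀ hδ0']
        have h2 : (⌈(N:ℝ)*η*ri⌉₊:ℝ) ≤ (N:ℝ) := by exact_mod_cast hkN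
        have h3 : (⌈(N:ℝ)*η*ri⌉₊:ℝ)*δ ≤ (N:ℝ)*δ := mul_le_mul_of_nonneg_right h2 hδ0'.le
        rw [hδ_def] at h3 ⊢
        linarith only [he1, h3]
      exact mul_le_mul_of_nonneg_right hkNr (pow_nonneg hq0.le _)
  have hlow : Tendsto (fun N : ℕ =>
      1 - (⌈(N:ℝ)*η*ri⌉₊ : ℝ) * q ^ (⌊(N:ℝ)*β⌋₊ + 1 - ⌈(N:ℝ)*η*ri⌉₊)) atTop (nhds 1) := by
    have h := (tendsto_const_nhds (x := (1:ℝ)) (f := atTop)).sub hb0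
    rw [sub_zero] at h
    exact h
  apply tendsto_of_tendsto_of_tendsto_of_le_of_le' hlow tendsto_const_nhds
  · filter_upwards [hfacts] with N hN
    exact hN.2.1
  · filter_upwards [hfacts] with N hN
    exact hN.2.2
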